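/- (Corollary 1.) Let ū, z, δ_h, u₁, u₂, θ be real numbers with u₂ ≤ u₁ ≤ ū, θ > 0, 0 ≤ δ_h ≤ u₁ − u₂, and set δ = u₁ − u₂. If u₁·Φ(δ/θ) + u₂·Φ(−δ/θ) + θ·φ(δ/θ) ≥ z, then θ is at least the infimum of the set {t ∈ ℝ : t > 0 and ū + t·φ(δ_h/t) ≥ z}. -/
import Mathlib
open MeasureTheory ProbabilityTheory Real

noncomputable def phi (w : ℝ) : ℝ := (1 / Real.sqrt (2 * Real.pi)) * Real.exp (-w ^ 2 / 2)

noncomputable def Phi (w : ℝ) : ℝ := ∫ u in Set.Iic w, phi u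

lemma phi_nonneg (w : ℝ) : 0 ≤ phi w := by
  unfold phi
  positivity

lemma integrable_phi : Integrable phi := by
  have h : phi = fun u => (1 / Real.sqrt (2 * Real.pi)) * Real.exp (-(1/2) * u ^ 2) := by
    funext u; unfold phi; ring_nf
  rw [h]
  exact (integrable_exp_neg_mul_sq (by norm_num)).const_mul _

lemma integral_phi : ∫ u, phi u = 1 := by
  have h : ∫ u, phi u = (1 / Real.sqrt (2 * Real.pi)) * ∫ u, Real.exp (-(1/2) * u ^ 2) := by
    rw [← integral_const_mul]; congr 1; funext u; unfold phi; ring_nf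
  rw [h, integral_gaussian]
  rw [div_div_eq_mul_div, div_one, mul_comm, one_div, mul_comm π 2]
  exact mul_inv_cancel₀ (by positivity)

lemma phi_neg (w : ℝ) : phi (-w) = phi w := by unfold phi; ring_nf

lemma Phi_nonneg (w : ℝ) : 0 ≤ Phi w :=
  setIntegral_nonneg measurableSet_Iic fun u _ => phi_nonneg u

lemma Phi_add_Phi_neg (w : ℝ) : Phi w + Phi (-w) = 1 := by
  have h1 : Phi (-w) = ∫ u in Set.Ioi w, phi u := by
    rw [Phi, ← neg_neg w, ← integral_comp_neg_Iic]
    simp [phi_neg, neg_neg]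
  rw [Phi, h1, intervalIntegral.integral_Iic_add_Ioi integrable_phi.integrableOn integrable_phi.integrableOn,
    integral_phi]

theorem theta_lower_bound_interval
    (ubar z δh u₁ u₂ θ : ℝ) (h21 : u₂ ≤ u₁) (h1bar : u₁ ≤ ubar) (hθ : 0 < θ)
    (hδh0 : 0 ≤ δh) (hδh : δh ≤ u₁ - u₂)
    (hz : u₁ * Phi ((u₁ - u₂) / θ) + u₂ * Phi (-(u₁ - u₂) / θ)
            + θ * phi ((u₁ - u₂) / θ) ≥ z) :
    sInf {t : ℝ | 0 < t ∧ ubar + t * phi (δh / t) ≥ z} ≤ θ := by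
  have hmem : θ ∈ {t : ℝ | 0 < t ∧ ubar + t * phi (δh / t) ≥ z} := by
    refine ⟨hθ, ?_⟩
    have h1 : u₁ * Phi ((u₁ - u₂) / θ) + u₂ * Phi (-(u₁ - u₂) / θ) ≤ ubar := by
      have hPn : 0 ≤ Phi (-(u₁ - u₂) / θ) := Phi_nonneg _
      have hPn2 : 0 ≤ Phi ((u₁ - u₂) / θ) := Phi_nonneg _
      have key : Phi ((u₁ - u₂) / θ) + Phi (-((u₁ - u₂) / θ)) = 1 := Phi_add_Phi_neg _
      have hrw : -(u₁ - u₂) / θ = -((u₁ - u₂) / θ) := by ring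
      calc u₁ * Phi ((u₁ - u₂) / θ) + u₂ * Phi (-(u₁ - u₂) / θ)
          ≤ u₁ * Phi ((u₁ - u₂) / θ) + u₁ * Phi (-(u₁ - u₂) / θ) := by
            gcongr
          _ = u₁ * (Phi ((u₁ - u₂) / θ) + Phi (-((u₁ - u₂) / θ))) := by rw [hrw]; ring
          _ = u₁ := by rw [key, mul_one]
          _ ≤ ubar := h1bar
    have h2 : phi ((u₁ - u₂) / θ) ≤ phi (δh / θ) := by
      unfold phi
      gcongr
    nlinarith [phi_nonneg (δh / θ)]
  have hbdd : BddBelow {t : ℝ | 0 < t ∧ ubar + t * phi (δh / t) ≥ z} :=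
    ⟨0, fun t ht => ht.1.le⟩
  exact csInf_le hbdd hmem
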